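/- Fix an integer k ≥ 1 and a real number s. The function x ↦ (4·sin²(x/2))^s · sin(kx/2) / sin²(x/2) is square-integrable on the interval (−π, π) if and only if s > 1/4. (Here t^s denotes the real power of the nonnegative number t = 4·sin²(x/2).) -/

import Mathlib

open Real MeasureTheory Set

private lemma aux_eq (s x : ℝ) (k : ℤ) (hx : x ∈ Ioo (-π) π) :
    ((4 * Real.sin (x / 2) ^ 2) ^ s * Real.sin ((k : ℝ) * x / 2)
          / Real.sin (x / 2) ^ 2) ^ 2
      = 2 ^ (4*s) * (|Real.sin (x/2)| ^ (4*s - 4) * Real.sin ((k:ℝ)*x/2) ^ 2) := by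
  rcases eq_or_ne x 0 with rfl | hx0
  · simp
  · have hπ := pi_pos
    have hs : Real.sin (x/2) ≠ 0 := by
      apply Real.sin_ne_zero_iff.2
      intro n hn
      rcases lt_trichotomy n 0 with h | rfl | h
      · have hn1 : n ≤ -1 := by omega
        have : (n:ℝ) ≤ -1 := by exact_mod_cast hn1
        nlinarith [hx.1]
      · simp at hn; exact hx0 (by linarith)
      · have : (1:ℝ) ≤ (n:ℝ) := by exact_mod_cast h
        nlinarith [hx.2]
    set a := |Real.sin (x/2)| with ha
    have ha0 : 0 < a := abs_pos.2 hs
    have h1 : 4 * Real.sin (x/2)^2 = (2*a)^2 := by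
      rw [mul_pow, sq_abs]; ring
    have h2 : ((2*a)^2 : ℝ) ^ s = 2^(2*s) * a^(2*s) := by
      rw [← Real.rpow_natCast (2*a) 2, ← Real.rpow_mul (by positivity)]
      rw [Real.mul_rpow (by norm_num) ha0.le]
      norm_num [mul_comm]
    have h3 : Real.sin (x/2)^2 = a^(2:ℝ) := by
      rw [Real.rpow_two, sq_abs]
    rw [h1, h2, h3]
    rw [div_pow, mul_pow, mul_pow]
    rw [← Real.rpow_natCast (2^(2*s)) 2, ← Real.rpow_natCast (a^(2*s)) 2,
      ← Real.rpow_natCast (a^(2:ℝ)) 2,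
      ← Real.rpow_mul (by norm_num : (0:ℝ) ≤ 2), ← Real.rpow_mul ha0.le,
      ← Real.rpow_mul ha0.le]
    rw [div_eq_mul_inv, ← Real.rpow_neg ha0.le, mul_assoc, mul_comm (Real.sin ((k:ℝ)*x/2)^2)]
    push_cast
    rw [show 2*s*(2:ℝ) = 4*s by ring, show (-(2*(2:ℝ))) = -4 by norm_num,
      show (4*s-4 : ℝ) = 4*s + (-4) by ring, Real.rpow_add ha0]
    ring

private lemma aux_abs_rpow_int {t : ℝ} (ht : -1 < t) :
    IntegrableOn (fun x : ℝ => |x| ^ t) (Ioo (-π) π) := by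
  have hπ := pi_pos
  have h0 : IntervalIntegrable (fun x : ℝ => |x| ^ t) volume 0 π := by
    rw [intervalIntegrable_iff_integrableOn_Ioo_of_le hπ.le]
    exact ((intervalIntegral.integrableOn_Ioo_rpow_iff hπ).2 ht).congr_fun
      (fun x hx => by rw [abs_of_pos hx.1]) measurableSet_Ioo
  have h1 : IntervalIntegrable (fun x : ℝ => |x| ^ t) volume (-π) 0 := by
    have := (IntervalIntegrable.iff_comp_neg enorm_ne_top).mp h0
    simp only [abs_neg, neg_zero] at this
    exact this.symm
  exact (intervalIntegrable_iff_integrableOn_Ioo_of_le (by linarith)).1 (h1.trans h0)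

theorem potential_in_Hs_iff (k : ℤ) (hk : 1 ≤ k) (s : ℝ) :
    IntegrableOn
      (fun x : ℝ =>
        ((4 * Real.sin (x / 2) ^ 2) ^ s * Real.sin ((k : ℝ) * x / 2)
          / Real.sin (x / 2) ^ 2) ^ 2)
      (Set.Ioo (-π) π) ↔ 1 / 4 < s := by
  have hπ := pi_pos
  have hkR : (1:ℝ) ≤ (k:ℝ) := by exact_mod_cast hk
  have hkpos : (0:ℝ) < (k:ℝ) := by linarith
  rw [integrableOn_congr_fun (g := fun x : ℝ =>
      2 ^ (4*s) * (|Real.sin (x/2)| ^ (4*s - 4) * Real.sin ((k:ℝ)*x/2) ^ 2))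
      (fun x hx => aux_eq s x k hx) measurableSet_Ioo]
  have hcu : IsUnit ((2:ℝ) ^ (4*s)) := IsUnit.mk0 _ (by positivity)
  have hmeas : Measurable fun x : ℝ =>
      |Real.sin (x/2)| ^ (4*s - 4) * Real.sin ((k:ℝ)*x/2) ^ 2 := by fun_prop
  rw [show (fun x : ℝ =>
      2 ^ (4*s) * (|Real.sin (x/2)| ^ (4*s - 4) * Real.sin ((k:ℝ)*x/2) ^ 2)) =
      fun x : ℝ => (2:ℝ) ^ (4*s) *
        ((fun y : ℝ => |Real.sin (y/2)| ^ (4*s - 4) * Real.sin ((k:ℝ)*y/2) ^ 2) x) from rfl]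
  rw [IntegrableOn, integrable_const_mul_iff hcu]
  constructor
  · -- integrable → 1/4 < s
    intro h
    by_contra hs
    push_neg at hs
    have hsub : Ioo (0:ℝ) (π / k) ⊆ Ioo (-π) π := by
      intro x hx
      constructor
      · linarith [hx.1]
      · have : π / k ≤ π := by
          rw [div_le_iff₀ hkpos]; nlinarith
        linarith [hx.2]
    have h2 : IntegrableOn (fun x : ℝ =>
        |Real.sin (x/2)| ^ (4*s - 4) * Real.sin ((k:ℝ)*x/2) ^ 2) (Ioo 0 (π/k)) :=
      IntegrableOn.mono_set h hsub
    have hπk : (0:ℝ) < π / k := div_pos hπ hkpos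
    -- lower bound by C * x ^ (4s-2)
    have hbound : ∀ x ∈ Ioo (0:ℝ) (π/k),
        (2:ℝ)^(4-4*s) / π^2 * x ^ (4*s-2)
          ≤ |Real.sin (x/2)| ^ (4*s - 4) * Real.sin ((k:ℝ)*x/2) ^ 2 := by
      intro x hx
      obtain ⟨hx0, hxu⟩ := hx
      have hxπ : x < π := lt_of_lt_of_le hxu (by rw [div_le_iff₀ hkpos]; nlinarith)
      have hsinpos : 0 < Real.sin (x/2) :=
        Real.sin_pos_of_pos_of_lt_pi (by linarith) (by linarith)
      have habs : |Real.sin (x/2)| = Real.sin (x/2) := abs_of_pos hsinpos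
      -- sin(x/2) ≤ x/2
      have h4 : Real.sin (x/2) ≤ x/2 := Real.sin_le (by linarith)
      have h5 : (x/2) ^ (4*s-4) ≤ Real.sin (x/2) ^ (4*s-4) :=
        Real.rpow_le_rpow_of_nonpos hsinpos h4 (by linarith)
      -- sin(kx/2) ≥ x/π
      have hxk : x * k < π := (lt_div_iff₀ hkpos).1 hxu
      have hkx2 : (k:ℝ)*x/2 ≤ π/2 := by nlinarith
      have h6 : x / π ≤ Real.sin ((k:ℝ)*x/2) := by
        have hj := Real.mul_le_sin (x := (k:ℝ)*x/2) (by positivity) hkx2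
        have : 2/π * (x/2) ≤ 2/π * ((k:ℝ)*x/2) := by
          apply mul_le_mul_of_nonneg_left _ (by positivity)
          nlinarith
        calc x / π = 2/π * (x/2) := by ring
        _ ≤ 2/π * ((k:ℝ)*x/2) := this
        _ ≤ _ := hj
      have h7 : (x/π)^2 ≤ Real.sin ((k:ℝ)*x/2)^2 := by
        apply pow_le_pow_left₀ (by positivity) h6
      have h8 : (x/2) ^ (4*s-4) * (x/π)^2
          ≤ |Real.sin (x/2)| ^ (4*s - 4) * Real.sin ((k:ℝ)*x/2) ^ 2 := by
        rw [habs]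
        apply mul_le_mul h5 h7 (by positivity) (Real.rpow_nonneg hsinpos.le _)
      refine le_trans (le_of_eq ?_) h8
      have e1 : ((x/2:ℝ))^(4*s-4) = x^(4*s-4) / 2^(4*s-4) :=
        Real.div_rpow hx0.le (by norm_num) (4*s-4)
      have e2 : x^(4*s-2) = x^(4*s-4) * x^2 := by
        rw [← Real.rpow_two, ← Real.rpow_add hx0]; congr 1; ring
      have e3 : (2:ℝ)^(4-4*s) = (2^(4*s-4))⁻¹ := by
        rw [show (4-4*s) = -(4*s-4) by ring, Real.rpow_neg (by norm_num : (0:ℝ) ≤ 2)]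
      have h2ne : ((2:ℝ)^(4*s-4)) ≠ 0 := by positivity
      rw [e1, e2, e3]
      field_simp
      try ring
    -- hence x ^ (4s-2) integrable on Ioo 0 (π/k)
    have hint : IntegrableOn (fun x : ℝ =>
        (2:ℝ)^(4-4*s) / π^2 * x ^ (4*s-2)) (Ioo 0 (π/k)) := by
      apply Integrable.mono' h2 (by fun_prop : Measurable fun x : ℝ =>
        (2:ℝ)^(4-4*s) / π^2 * x ^ (4*s-2)).aestronglyMeasurable
      rw [ae_restrict_iff' measurableSet_Ioo]
      filter_upwards with x hx
      have h0 : (0:ℝ) ≤ (2:ℝ)^(4-4*s) / π^2 * x ^ (4*s-2) := by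
        have := Real.rpow_nonneg hx.1.le (4*s-2)
        positivity
      rw [Real.norm_eq_abs, abs_of_nonneg h0]
      exact hbound x hx
    have hcu2 : IsUnit ((2:ℝ)^(4-4*s) / π^2) := IsUnit.mk0 _ (by positivity)
    have := (integrable_const_mul_iff hcu2 (fun x : ℝ => x ^ (4*s-2))).1 hint
    have := (intervalIntegral.integrableOn_Ioo_rpow_iff hπk).1 this
    linarith
  · -- 1/4 < s → integrable
    intro hs
    rcases le_or_gt 1 s with h1s | h1s
    · -- bounded case
      apply Measure.integrableOn_of_bounded (M := 1)
        measure_Ioo_lt_top.ne hmeas.aestronglyMeasurable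
      filter_upwards with x
      have ha1 : |Real.sin (x/2)| ≤ 1 := abs_le.2 ⟨Real.neg_one_le_sin _, Real.sin_le_one _⟩
      have h2 : |Real.sin (x/2)| ^ (4*s-4) ≤ 1 :=
        Real.rpow_le_one (abs_nonneg _) ha1 (by linarith)
      have h3 : Real.sin ((k:ℝ)*x/2)^2 ≤ 1 := Real.sin_sq_le_one _
      have h4 : (0:ℝ) ≤ |Real.sin (x/2)| ^ (4*s-4) := Real.rpow_nonneg (abs_nonneg _) _
      rw [Real.norm_eq_abs, abs_of_nonneg (mul_nonneg h4 (sq_nonneg _))]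
      nlinarith [sq_nonneg (Real.sin ((k:ℝ)*x/2))]
    · -- singular case: bound by C |x|^(4s-2)
      have hC : (0:ℝ) < π^(4-4*s) * ((k:ℝ)^2/4) := by positivity
      have hint : IntegrableOn (fun x : ℝ =>
          π^(4-4*s) * ((k:ℝ)^2/4) * |x| ^ (4*s-2)) (Ioo (-π) π) :=
        (aux_abs_rpow_int (by linarith)).const_mul _
      apply Integrable.mono' hint hmeas.aestronglyMeasurable
      rw [ae_restrict_iff' measurableSet_Ioo]
      filter_upwards with x hx
      have hnn : (0:ℝ) ≤ |Real.sin (x/2)| ^ (4*s-4) * Real.sin ((k:ℝ)*x/2)^2 :=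
        mul_nonneg (Real.rpow_nonneg (abs_nonneg _) _) (sq_nonneg _)
      rw [Real.norm_eq_abs, abs_of_nonneg hnn]
      rcases eq_or_ne x 0 with rfl | hx0
      · simp
        positivity
      · have hxa : 0 < |x| := abs_pos.2 hx0
        have hxπ : |x| < π := abs_lt.2 ⟨hx.1, hx.2⟩
        -- |sin(x/2)| ≥ |x|/π
        have hJ : |x|/π ≤ |Real.sin (x/2)| := by
          have := Real.mul_abs_le_abs_sin (x := x/2) (by rw [abs_div, abs_two]; linarith [hxπ])
          calc |x|/π = 2/π * |x/2| := by rw [abs_div, abs_two]; ring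
          _ ≤ _ := this
        have h5 : |Real.sin (x/2)| ^ (4*s-4) ≤ (|x|/π) ^ (4*s-4) :=
          Real.rpow_le_rpow_of_nonpos (by positivity) hJ (by linarith)
        have h6 : Real.sin ((k:ℝ)*x/2)^2 ≤ ((k:ℝ)*x/2)^2 := Real.sin_sq_le_sq
        have h8 : |Real.sin (x/2)| ^ (4*s-4) * Real.sin ((k:ℝ)*x/2)^2
            ≤ (|x|/π) ^ (4*s-4) * ((k:ℝ)*x/2)^2 :=
          mul_le_mul h5 h6 (sq_nonneg _) (Real.rpow_nonneg (by positivity) _)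
        refine h8.trans (le_of_eq ?_)
        have e1 : ((|x|/π:ℝ))^(4*s-4) = |x|^(4*s-4) / π^(4*s-4) :=
          Real.div_rpow (abs_nonneg _) hπ.le (4*s-4)
        have e2 : |x|^(4*s-2) = |x|^(4*s-4) * |x|^2 := by
          rw [← Real.rpow_two, ← Real.rpow_add hxa]; congr 1; ring
        have e3 : π^(4-4*s) = (π^(4*s-4))⁻¹ := by
          rw [show (4-4*s) = -(4*s-4) by ring, Real.rpow_neg hπ.le]
        have e4 : ((k:ℝ)*x/2)^2 = (k:ℝ)^2/4 * |x|^2 := by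
          rw [sq_abs]; ring
        have hπne : (π:ℝ)^(4*s-4) ≠ 0 := by positivity
        rw [e1, e2, e3, e4]
        field_simp
        try ring
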